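/- arXiv:2509.05191 — 4 statements merged into one kernel-verified Lean document; each statement's English description precedes it below -/
import Mathlib

section
/- Consider the augmented system (f_A, g_A, h_A) on ℝ × ℝ^{n_A} built from infinitely differentiable F : ℝ×ℝ^n → ℝ^n, G : ℝ×ℝ^n → ℝ^{n×r}, h : ℝ×ℝ^n → ℝ^m with r = m. Then for every l ∈ {1,…,m} and every natural number i ≥ 0, the Lie derivative L_{f_A}^i h_{A,l} does not depend on the augmented coordinates: for all t ∈ ℝ, x ∈ ℝ^n and all z̃, z̃' ∈ ℝ^{Σ_k ρ_k}, L_{f_A}^i h_{A,l}(t,(x,z̃)) = L_{f_A}^i h_{A,l}(t,(x,z̃')). -/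
noncomputable section

open Real Finset

/-- One-step Lie derivative of a scalar function `ψ` along the time-varying vector field `F`
on a general state space: `L_F ψ (t,x) = (∂ₓ ψ)·F + ∂ₜ ψ`, expressed as the total (Fréchet)
derivative of `ψ` in the direction `(1, F(t,x))`. -/
def lieF {E : Type*} [NormedAddCommGroup E] [NormedSpace ℝ E]
    (F : ℝ × E → E) (ψ : ℝ × E → ℝ) : ℝ × E → ℝ :=
  fun p => fderiv ℝ ψ p (1, F p)

/-- Iterated Lie derivative `L_F^j ψ`, with `L_F^0 ψ = ψ`. -/
def lieFIter {E : Type*} [NormedAddCommGroup E] [NormedSpace ℝ E]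
    (F : ℝ × E → E) (ψ : ℝ × E → ℝ) (j : ℕ) : ℝ × E → ℝ :=
  (lieF F)^[j] ψ

/-- Mixed Lie derivative `L_Ĝ ψ (t,x) = (∂ₓ ψ)(t,x)·Ĝ(t,x) ∈ ℝ^{1×r}` as a row vector,
where the matrix field `Ĝ` is given through its columns `Ĝ(t,x) j ∈ E`. -/
def lieGcol {E : Type*} [NormedAddCommGroup E] [NormedSpace ℝ E] {r : ℕ}
    (G : ℝ × E → Fin r → E) (ψ : ℝ × E → ℝ) : ℝ × E → Fin r → ℝ :=
  fun p j => fderiv ℝ ψ p (0, G p j)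

/-- The augmented state space `x_A = (x, z̃)`, where `z̃` stacks the scalars
`z_k^{(0)}, …, z_k^{(ρ_k-1)}` for `k = 1,…,m`. -/
abbrev AugState (n m : ℕ) (ρ : Fin m → ℕ) : Type :=
  (Fin n → ℝ) × (∀ k : Fin m, Fin (ρ k) → ℝ)

/-- The augmented vector field `f_A`: first block `F(t,x)`; the `k`-th slack block is the
shift `(z_k^{(1)}, …, z_k^{(ρ_k-1)}, 0)`. -/
def augF {n m : ℕ} (ρ : Fin m → ℕ) (F : ℝ × (Fin n → ℝ) → Fin n → ℝ) :
    ℝ × AugState n m ρ → AugState n m ρ :=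
  fun p =>
    (F (p.1, p.2.1),
      fun k i => if hi : (i : ℕ) + 1 < ρ k then p.2.2 k ⟨(i : ℕ) + 1, hi⟩ else 0)

/-- The columns of the augmented input matrix `g_A`: first `n` rows `G(t,x)·D(z)` with
`D(z) = diag(z_1^{(0)},…,z_r^{(0)})`; remaining rows zero, except that the row in the slot
of `z_k^{(ρ_k-1)}` equals the `k`-th standard basis row. -/
def augG {n m : ℕ} (ρ : Fin m → ℕ) (G : ℝ × (Fin n → ℝ) → Fin n → Fin m → ℝ) :
    ℝ × AugState n m ρ → Fin m → AugState n m ρ :=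
  fun p j =>
    ((fun a => G (p.1, p.2.1) a j *
        (if h : 0 < ρ j then p.2.2 j ⟨0, h⟩ else 0)),
      fun k i => if k = j ∧ (i : ℕ) = ρ k - 1 then 1 else 0)

/-- The augmented output `h_A(t,(x,z̃)) = h(t,x)`, `l`-th component. -/
def augH {n m : ℕ} (ρ : Fin m → ℕ) (h : ℝ × (Fin n → ℝ) → Fin m → ℝ) (l : Fin m) :
    ℝ × AugState n m ρ → ℝ :=
  fun p => h (p.1, p.2.1) l

/-- The integral augmented state space `x_I = (x_A, ξ)`. -/
abbrev IntState (n m : ℕ) (ρ : Fin m → ℕ) : Type :=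
  AugState n m ρ × (Fin m → ℝ)

/-- The bounded saturation function `s_β(v) = 2β(1/(e^{-v}+1) - 1/2)` (Eq. (16) of the paper). -/
def sBeta (β v : ℝ) : ℝ := 2 * β * (1 / (Real.exp (-v) + 1) - 1 / 2)

/-- The integral augmented vector field `f_I(t,(x_A,ξ)) = (f_A(t,x_A) + g_A(t,x_A)·s_β(ξ), 0)`. -/
def intF {n m : ℕ} (ρ : Fin m → ℕ) (F : ℝ × (Fin n → ℝ) → Fin n → ℝ)
    (G : ℝ × (Fin n → ℝ) → Fin n → Fin m → ℝ) (β : ℝ) :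
    ℝ × IntState n m ρ → IntState n m ρ :=
  fun p =>
    (augF ρ F (p.1, p.2.1) + ∑ j, sBeta β (p.2.2 j) • augG ρ G (p.1, p.2.1) j, 0)

/-- The columns of the integral augmented input matrix `g_I = (0 ; I_m)`. -/
def intG {n m : ℕ} (ρ : Fin m → ℕ) :
    ℝ × IntState n m ρ → Fin m → IntState n m ρ :=
  fun _ j => (0, Pi.single j 1)

/-- The integral augmented output `h_I(t,(x_A,ξ)) = h_A(t,x_A)`, `l`-th component. -/
def intH {n m : ℕ} (ρ : Fin m → ℕ) (h : ℝ × (Fin n → ℝ) → Fin m → ℝ) (l : Fin m) :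
    ℝ × IntState n m ρ → ℝ :=
  fun p => augH ρ h l (p.1, p.2.1)

/-- `lieF` preserves smoothness. -/
lemma lieF_contDiff {E : Type*} [NormedAddCommGroup E] [NormedSpace ℝ E]
    {F : ℝ × E → E} {ψ : ℝ × E → ℝ}
    (hF : ContDiff ℝ (⊤ : ℕ∞) F) (hψ : ContDiff ℝ (⊤ : ℕ∞) ψ) :
    ContDiff ℝ (⊤ : ℕ∞) (lieF F ψ) :=
  (hψ.fderiv_right (by simp)).clm_apply (contDiff_const.prodMk hF)

/-- The projection `(t,(x,z̃)) ↦ (t,x)` as a continuous linear map. -/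
def augProj (n m : ℕ) (ρ : Fin m → ℕ) :
    (ℝ × AugState n m ρ) →L[ℝ] (ℝ × (Fin n → ℝ)) :=
  (ContinuousLinearMap.fst ℝ ℝ (AugState n m ρ)).prod
    ((ContinuousLinearMap.fst ℝ (Fin n → ℝ) _).comp
      (ContinuousLinearMap.snd ℝ ℝ (AugState n m ρ)))

lemma lieF_augF_comp {n m : ℕ} (ρ : Fin m → ℕ)
    (F : ℝ × (Fin n → ℝ) → Fin n → ℝ) {ψ : ℝ × (Fin n → ℝ) → ℝ}
    (hψ : ContDiff ℝ (⊤ : ℕ∞) ψ) :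
    lieF (augF ρ F) (ψ ∘ augProj n m ρ) = (lieF F ψ) ∘ augProj n m ρ := by
  funext p
  have hd : DifferentiableAt ℝ ψ (augProj n m ρ p) :=
    (hψ.differentiable (by simp)).differentiableAt
  have hcomp : fderiv ℝ (ψ ∘ augProj n m ρ) p =
      (fderiv ℝ ψ (augProj n m ρ p)).comp (augProj n m ρ) := by
    rw [fderiv_comp p hd (augProj n m ρ).differentiableAt,
      (augProj n m ρ).fderiv]
  simp only [lieF, Function.comp_apply, hcomp]
  rfl

lemma lieFIter_augF_comp {n m : ℕ} (ρ : Fin m → ℕ)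
    (F : ℝ × (Fin n → ℝ) → Fin n → ℝ) {ψ : ℝ × (Fin n → ℝ) → ℝ}
    (hF : ContDiff ℝ (⊤ : ℕ∞) F) (hψ : ContDiff ℝ (⊤ : ℕ∞) ψ) (i : ℕ) :
    lieFIter (augF ρ F) (ψ ∘ augProj n m ρ) i = (lieFIter F ψ i) ∘ augProj n m ρ := by
  induction i with
  | zero => rfl
  | succ i ih =>
      have hsm : ContDiff ℝ (⊤ : ℕ∞) (lieFIter F ψ i) := by
        clear ih
        induction i with
        | zero => exact hψ
        | succ i ih =>
            rw [lieFIter, Function.iterate_succ_apply']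
            exact lieF_contDiff hF ih
      simp only [lieFIter, Function.iterate_succ_apply']
      rw [← lieFIter, ← lieFIter, ih, lieF_augF_comp ρ F hsm]

/-- **Induction claim in the proof of Proposition 1 of the paper.**
The iterated Lie derivatives `L_{f_A}^i h_{A,l}` do not depend on the augmented
(slack) coordinates `z̃`. -/
theorem augmented_lie_independent_of_slack
    {n m : ℕ} (ρ : Fin m → ℕ) (hρ : ∀ k, 1 ≤ ρ k)
    (F : ℝ × (Fin n → ℝ) → Fin n → ℝ)
    (G : ℝ × (Fin n → ℝ) → Fin n → Fin m → ℝ)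
    (h : ℝ × (Fin n → ℝ) → Fin m → ℝ)
    (hF : ContDiff ℝ (⊤ : ℕ∞) F) (hG : ContDiff ℝ (⊤ : ℕ∞) G)
    (hh : ContDiff ℝ (⊤ : ℕ∞) h)
    (l : Fin m) (i : ℕ) (t : ℝ) (x : Fin n → ℝ)
    (z z' : ∀ k : Fin m, Fin (ρ k) → ℝ) :
    lieFIter (augF ρ F) (augH ρ h l) i (t, (x, z)) =
      lieFIter (augF ρ F) (augH ρ h l) i (t, (x, z')) := by
  have hhl : ContDiff ℝ (⊤ : ℕ∞) (fun q : ℝ × (Fin n → ℝ) => h q l) :=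
    (contDiff_apply ℝ ℝ l).comp hh
  have heq : augH ρ h l = (fun q : ℝ × (Fin n → ℝ) => h q l) ∘ augProj n m ρ := rfl
  rw [heq, lieFIter_augF_comp ρ F hF hhl]
  rfl
end
end

section
/- Consider the augmented system (f_A, g_A, h_A) on ℝ × ℝ^{n_A} built from infinitely differentiable F : ℝ×ℝ^n → ℝ^n, G : ℝ×ℝ^n → ℝ^{n×r}, h : ℝ×ℝ^n → ℝ^m with r = m. For each l ∈ {1,…,m} and each natural number j ≥ 0, the function L_{f_A}^j h_{A,l}(t,(x,z̃)) does not depend on z̃; writing it as Ĥ_{l,j}(t,x), the mixed Lie derivative satisfies, for every (t,x_A) with x_A = (x,z̃): L_{g_A} L_{f_A}^j h_{A,l}(t,x_A) = (∂_x Ĥ_{l,j})(t,x) · G(t,x) · D(z) ∈ ℝ^{1×r}, where ∂_x Ĥ_{l,j} is the row vector of partial derivatives of Ĥ_{l,j} in x and D(z) = diag(z_1^{(0)},…,z_r^{(0)}). -/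
noncomputable section

open Real Finset

/-- **Key formula (Eq. (44)) in the proof of Proposition 1 of the paper.**
`L_{f_A}^j h_{A,l}` does not depend on the slack coordinates `z̃`, and the mixed Lie
derivative factors as `L_{g_A} L_{f_A}^j h_{A,l}(t,x_A) = (∂ₓ Ĥ_{l,j})(t,x)·G(t,x)·D(z)`,
where `Ĥ_{l,j}(t,x) := L_{f_A}^j h_{A,l}(t,(x,0))` is the slack-independent representative. -/
theorem augmented_mixed_lie_formula
    {n m : ℕ} (ρ : Fin m → ℕ) (hρ : ∀ k, 1 ≤ ρ k)
    (F : ℝ × (Fin n → ℝ) → Fin n → ℝ)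
    (G : ℝ × (Fin n → ℝ) → Fin n → Fin m → ℝ)
    (h : ℝ × (Fin n → ℝ) → Fin m → ℝ)
    (hF : ContDiff ℝ (⊤ : ℕ∞) F) (hG : ContDiff ℝ (⊤ : ℕ∞) G)
    (hh : ContDiff ℝ (⊤ : ℕ∞) h)
    (l : Fin m) (j : ℕ) :
    -- `L_{f_A}^j h_{A,l}` does not depend on `z̃`
    (∀ (t : ℝ) (x : Fin n → ℝ) (z z' : ∀ k : Fin m, Fin (ρ k) → ℝ),
      lieFIter (augF ρ F) (augH ρ h l) j (t, (x, z)) =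
        lieFIter (augF ρ F) (augH ρ h l) j (t, (x, z'))) ∧
    -- the factorisation `L_{g_A} L_{f_A}^j h_{A,l} = (∂ₓ Ĥ_{l,j})·G·D(z)`, componentwise
    (∀ (t : ℝ) (x : Fin n → ℝ) (z : ∀ k : Fin m, Fin (ρ k) → ℝ) (i : Fin m),
      lieGcol (augG ρ G) (lieFIter (augF ρ F) (augH ρ h l) j) (t, (x, z)) i =
        fderiv ℝ (fun q : ℝ × (Fin n → ℝ) =>
            lieFIter (augF ρ F) (augH ρ h l) j (q.1, (q.2, 0)))
          (t, x) (0, fun a => G (t, x) a i) * z i ⟨0, hρ i⟩) := by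
 -- projection (t,(x,z)) ↦ (t,x) as a continuous linear map
  set L : (ℝ × AugState n m ρ) →L[ℝ] ℝ × (Fin n → ℝ) :=
    (ContinuousLinearMap.id ℝ ℝ).prodMap
      (ContinuousLinearMap.fst ℝ (Fin n → ℝ) (∀ k : Fin m, Fin (ρ k) → ℝ)) with hL
  have hLapp : ∀ (t : ℝ) (x : Fin n → ℝ) (z : ∀ k : Fin m, Fin (ρ k) → ℝ),
      L (t, (x, z)) = (t, x) := fun t x z => rfl
  -- the slack-independent representative
  obtain ⟨φ, hφ, hrep⟩ : ∃ φ : ℝ × (Fin n → ℝ) → ℝ, ContDiff ℝ (⊤ : ℕ∞) φ ∧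
      ∀ (t : ℝ) (x : Fin n → ℝ) (z : ∀ k : Fin m, Fin (ρ k) → ℝ),
        lieFIter (augF ρ F) (augH ρ h l) j (t, (x, z)) = φ (t, x) := by
    induction j with
    | zero => exact ⟨fun q => h q l, contDiff_pi.1 hh l, fun t x z => rfl⟩
    | succ j ih =>
      obtain ⟨φ, hφ, hrep⟩ := ih
      refine ⟨fun q => fderiv ℝ φ q (1, F q),
        (hφ.fderiv_right (by exact_mod_cast le_top)).clm_apply (contDiff_const.prodMk hF), ?_⟩
      intro t x z
      have hψ : lieFIter (augF ρ F) (augH ρ h l) j = φ ∘ ⇑L := by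
        funext p
        obtain ⟨t, x, z⟩ := p
        exact hrep t x z
      have hdφ : DifferentiableAt ℝ φ (L (t, (x, z))) :=
        (hφ.differentiable (by simp)).differentiableAt
      have : lieFIter (augF ρ F) (augH ρ h l) (j + 1) (t, (x, z)) =
          lieF (augF ρ F) (lieFIter (augF ρ F) (augH ρ h l) j) (t, (x, z)) := by
        simp only [lieFIter, Function.iterate_succ_apply']
      rw [this]
      show fderiv ℝ (lieFIter (augF ρ F) (augH ρ h l) j) (t, (x, z))
          (1, augF ρ F (t, (x, z))) = _
      rw [hψ, fderiv_comp _ hdφ L.differentiableAt, L.fderiv]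
      rfl
  constructor
  · intro t x z z'
    rw [hrep t x z, hrep t x z']
  · intro t x z i
    have hψ : lieFIter (augF ρ F) (augH ρ h l) j = φ ∘ ⇑L := by
      funext p
      obtain ⟨t, x, z⟩ := p
      exact hrep t x z
    have hdφ : DifferentiableAt ℝ φ (L (t, (x, z))) :=
      (hφ.differentiable (by simp)).differentiableAt
    have hrhs : (fun q : ℝ × (Fin n → ℝ) =>
        lieFIter (augF ρ F) (augH ρ h l) j (q.1, (q.2, 0))) = φ := by
      funext q
      exact hrep q.1 q.2 0
    show fderiv ℝ (lieFIter (augF ρ F) (augH ρ h l) j) (t, (x, z))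
        (0, augG ρ G (t, (x, z)) i) = _
    rw [hrhs, hψ, fderiv_comp _ hdφ L.differentiableAt, L.fderiv]
    have hLG : L (0, augG ρ G (t, (x, z)) i) =
        (z i ⟨0, hρ i⟩) • ((0, fun a => G (t, x) a i) : ℝ × (Fin n → ℝ)) := by
      have h0 : 0 < ρ i := hρ i
      have hd : (if h : 0 < ρ i then z i ⟨0, h⟩ else 0) = z i ⟨0, hρ i⟩ := dif_pos h0
      ext a
      · show (0 : ℝ) = _
        simp
      · show G (t, x) a i * (if h : 0 < ρ i then z i ⟨0, h⟩ else 0) = _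
        rw [hd]
        simp [mul_comm]
    show fderiv ℝ φ (L (t, (x, z))) (L (0, augG ρ G (t, (x, z)) i)) = _
    rw [hLG, map_smul, hLapp]
    simp [mul_comm]
end
end

section
/- Consider the augmented system (f_A, g_A, h_A) on ℝ × ℝ^{n_A} built from infinitely differentiable F : ℝ×ℝ^n → ℝ^n, G : ℝ×ℝ^n → ℝ^{n×r}, h : ℝ×ℝ^n → ℝ^m with r = m. Suppose there exist σ ∈ ℕ^m with σ_k ≥ 1 and a point (t_0, x_A^0) ∈ ℝ × ℝ^{n_A} such that, for each k ∈ {1,…,m}: L_{g_A} L_{f_A}^{i} h_{A,k}(t,x_A) = 0 for all (t,x_A) and all 0 ≤ i ≤ σ_k − 2, and L_{g_A} L_{f_A}^{σ_k−1} h_{A,k}(t_0, x_A^0) ≠ 0. Define Γ_{g_A}(t,x_A) ∈ ℝ^{m×m} as the matrix whose k-th row is L_{g_A} L_{f_A}^{σ_k−1} h_{A,k}(t,x_A). Then at every (t,x_A) with x_A = (x,z̃) such that z_i^{(0)} = 0 for some i ∈ {1,…,r}, the i-th column of Γ_{g_A}(t,x_A) is zero; in particular Γ_{g_A}(t,x_A)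 does not have full column rank and is not invertible. -/
noncomputable section

open Real Finset

lemma lieFIter_contDiff {E : Type*} [NormedAddCommGroup E] [NormedSpace ℝ E]
    {F : ℝ × E → E} {ψ : ℝ × E → ℝ} (hF : ContDiff ℝ (⊤ : ℕ∞) F)
    (hψ : ContDiff ℝ (⊤ : ℕ∞) ψ) (j : ℕ) : ContDiff ℝ (⊤ : ℕ∞) (lieFIter F ψ j) := by
  induction j with
  | zero => exact hψ
  | succ j ih =>
    rw [lieFIter, Function.iterate_succ_apply']
    exact lieF_contDiff hF ih

/-- The projection `(t,(x,z)) ↦ (t,x)` as a continuous linear map. -/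
def projA (n m : ℕ) (ρ : Fin m → ℕ) :
    (ℝ × AugState n m ρ) →L[ℝ] (ℝ × (Fin n → ℝ)) :=
  (ContinuousLinearMap.id ℝ ℝ).prodMap
    (ContinuousLinearMap.fst ℝ (Fin n → ℝ) (∀ k : Fin m, Fin (ρ k) → ℝ))

lemma fderiv_comp_projA {n m : ℕ} (ρ : Fin m → ℕ)
    (φ : ℝ × (Fin n → ℝ) → ℝ) (hφ : Differentiable ℝ φ) (p : ℝ × AugState n m ρ)
    (v : ℝ × AugState n m ρ) :
    fderiv ℝ (fun q => φ (q.1, q.2.1)) p v = fderiv ℝ φ (p.1, p.2.1) (v.1, v.2.1) := by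
  have h1 : (fun q : ℝ × AugState n m ρ => φ (q.1, q.2.1)) = φ ∘ (projA n m ρ) := rfl
  have h2 : fderiv ℝ (φ ∘ (projA n m ρ)) p
      = (fderiv ℝ φ ((projA n m ρ) p)).comp (projA n m ρ) := by
    rw [fderiv_comp p (hφ.differentiableAt) ((projA n m ρ).differentiableAt),
      (projA n m ρ).fderiv]
  rw [h1, h2]
  rfl

lemma lieF_aug_comp {n m : ℕ} (ρ : Fin m → ℕ)
    (F : ℝ × (Fin n → ℝ) → Fin n → ℝ)
    (φ : ℝ × (Fin n → ℝ) → ℝ) (hφ : Differentiable ℝ φ) :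
    lieF (augF ρ F) (fun q => φ (q.1, q.2.1))
      = fun p => lieF F φ (p.1, p.2.1) := by
  funext p
  simp only [lieF]
  rw [fderiv_comp_projA ρ φ hφ]
  rfl

lemma lieFIter_aug {n m : ℕ} (ρ : Fin m → ℕ)
    (F : ℝ × (Fin n → ℝ) → Fin n → ℝ)
    (h : ℝ × (Fin n → ℝ) → Fin m → ℝ)
    (hF : ContDiff ℝ (⊤ : ℕ∞) F) (hh : ContDiff ℝ (⊤ : ℕ∞) h)
    (k : Fin m) (j : ℕ) :
    lieFIter (augF ρ F) (augH ρ h k) j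
      = fun p => lieFIter F (fun q => h q k) j (p.1, p.2.1) := by
  have hk : ContDiff ℝ (⊤ : ℕ∞) (fun q => h q k) := contDiff_pi.mp hh k
  induction j with
  | zero => rfl
  | succ j ih =>
    have hd : Differentiable ℝ (lieFIter F (fun q => h q k) j) :=
      (lieFIter_contDiff hF hk j).differentiable (by simp)
    rw [lieFIter, Function.iterate_succ_apply', ← lieFIter, ih,
      lieF_aug_comp ρ F _ hd]
    funext p
    simp only [lieFIter, Function.iterate_succ_apply']

/-- **Proposition 1 of the paper (FBL is incompatible with augmentation).**
If the augmented system has (local) relative degree `σ`, then on the constraint boundary,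
i.e. wherever some slack variable `z_{i₀}^{(0)}` vanishes, the decoupling matrix
`Γ_{g_A}`, whose `k`-th row is `L_{g_A} L_{f_A}^{σ_k-1} h_{A,k}`, has a zero `i₀`-th
column; in particular it does not have full column rank and is not invertible. -/
theorem augmented_gamma_loses_rank_on_boundary
    {n m : ℕ} (ρ : Fin m → ℕ) (hρ : ∀ k, 1 ≤ ρ k)
    (F : ℝ × (Fin n → ℝ) → Fin n → ℝ)
    (G : ℝ × (Fin n → ℝ) → Fin n → Fin m → ℝ)
    (h : ℝ × (Fin n → ℝ) → Fin m → ℝ)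
    (hF : ContDiff ℝ (⊤ : ℕ∞) F) (hG : ContDiff ℝ (⊤ : ℕ∞) G)
    (hh : ContDiff ℝ (⊤ : ℕ∞) h)
    (σ : Fin m → ℕ) (hσ : ∀ k, 1 ≤ σ k)
    (hzero : ∀ k : Fin m, ∀ i : ℕ, i + 2 ≤ σ k →
      ∀ p : ℝ × AugState n m ρ,
        lieGcol (augG ρ G) (lieFIter (augF ρ F) (augH ρ h k) i) p = 0)
    (t₀ : ℝ) (xA₀ : AugState n m ρ)
    (hne : ∀ k : Fin m,
      lieGcol (augG ρ G) (lieFIter (augF ρ F) (augH ρ h k) (σ k - 1)) (t₀, xA₀) ≠ 0)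
    (t : ℝ) (x : Fin n → ℝ) (z : ∀ k : Fin m, Fin (ρ k) → ℝ)
    (i₀ : Fin m) (hz : z i₀ ⟨0, hρ i₀⟩ = 0) :
    (∀ k : Fin m,
      lieGcol (augG ρ G) (lieFIter (augF ρ F) (augH ρ h k) (σ k - 1)) (t, (x, z)) i₀ = 0) ∧
    ((Matrix.of fun k i =>
        lieGcol (augG ρ G) (lieFIter (augF ρ F) (augH ρ h k) (σ k - 1)) (t, (x, z)) i :
      Matrix (Fin m) (Fin m) ℝ)).rank < m ∧
    ¬ IsUnit ((Matrix.of fun k i =>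
        lieGcol (augG ρ G) (lieFIter (augF ρ F) (augH ρ h k) (σ k - 1)) (t, (x, z)) i :
      Matrix (Fin m) (Fin m) ℝ)) := by
  
  classical
  have hcol : ∀ k : Fin m,
      lieGcol (augG ρ G) (lieFIter (augF ρ F) (augH ρ h k) (σ k - 1)) (t, (x, z)) i₀ = 0 := by
    intro k
    have hk : ContDiff ℝ (⊤ : ℕ∞) (fun q => h q k) := contDiff_pi.mp hh k
    have hd : Differentiable ℝ (lieFIter F (fun q => h q k) (σ k - 1)) :=
      (lieFIter_contDiff hF hk (σ k - 1)).differentiable (by simp)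
    have hv : (((0 : ℝ), augG ρ G (t, (x, z)) i₀).1,
        ((0 : ℝ), augG ρ G (t, (x, z)) i₀).2.1) = (0 : ℝ × (Fin n → ℝ)) := by
      refine Prod.ext rfl ?_
      funext a
      show G ((t, (x, z)).1, (t, (x, z)).2.1) a i₀ *
        (if h : 0 < ρ i₀ then z i₀ ⟨0, h⟩ else 0) = 0
      have h0 : 0 < ρ i₀ := hρ i₀
      rw [dif_pos h0, show z i₀ ⟨0, h0⟩ = 0 from hz, mul_zero]
    rw [lieGcol, lieFIter_aug ρ F h hF hh k (σ k - 1),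
      fderiv_comp_projA ρ _ hd, hv, map_zero]
  refine ⟨hcol, ?_, ?_⟩
  · set M : Matrix (Fin m) (Fin m) ℝ := Matrix.of fun k i =>
        lieGcol (augG ρ G) (lieFIter (augF ρ F) (augH ρ h k) (σ k - 1)) (t, (x, z)) i
      with hM
    set d : Fin m → ℝ := fun j => if j = i₀ then 0 else 1 with hdd
    have hMD : M = M * Matrix.diagonal d := by
      ext k j
      rw [Matrix.mul_diagonal]
      by_cases hj : j = i₀
      · subst hj
        simp only [hdd, if_pos rfl, mul_zero]
        exact hcol k
      · simp [hdd, hj]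
    calc M.rank = (M * Matrix.diagonal d).rank := by rw [← hMD]
      _ ≤ (Matrix.diagonal d).rank := Matrix.rank_mul_le_right _ _
      _ = Fintype.card {i // d i ≠ 0} := Matrix.rank_diagonal d
      _ < Fintype.card (Fin m) := Fintype.card_subtype_lt (x := i₀) (by simp [hdd])
      _ = m := Fintype.card_fin m
  · rw [Matrix.isUnit_iff_isUnit_det]
    have hdet : (Matrix.of fun k i =>
        lieGcol (augG ρ G) (lieFIter (augF ρ F) (augH ρ h k) (σ k - 1)) (t, (x, z)) i :
        Matrix (Fin m) (Fin m) ℝ).det = 0 :=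
      Matrix.det_eq_zero_of_column_eq_zero i₀ (fun k => hcol k)
    rw [hdet]
    exact not_isUnit_zero
end
end

section
/- Consider the augmented system (f_A, g_A, h_A) on ℝ × ℝ^{n_A} built from infinitely differentiable F : ℝ×ℝ^n → ℝ^n, G : ℝ×ℝ^n → ℝ^{n×r}, h : ℝ×ℝ^n → ℝ^m with r = m, and its integral augmented system (f_I, g_I, h_I) on ℝ × ℝ^{n_A+m} for a parameter β > 0. Fix l ∈ {1,…,m} and σ_l ≥ 1, and suppose L_{g_A} L_{f_A}^{i} h_{A,l}(t,x_A) = 0 for all (t,x_A) and all 0 ≤ i ≤ σ_l − 2. Then for every (t, x_A, ξ) ∈ ℝ × ℝ^{n_A} × ℝ^m: (a) L_{f_I}^{σ_l} h_{I,l}(t,(x_A,ξ)) = L_{f_A}^{σ_l} h_{A,l}(t,x_A) + L_{g_A} L_{f_A}^{σ_l−1} h_{A,l}(t,x_A)·s_β(ξ); and (b) L_{g_I} L_{f_I}^{σ_l} h_{I,l}(t,(x_A,ξ)) = L_{g_A} L_{f_A}^{σ_l−1} h_{A,l}(t,x_A)·diag( s_β'(ξ_1),…,s_β'(ξ_m)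 ), where s_β'(v) = 2β·e^{−v}/(e^{−v}+1)². -/
noncomputable section

open Real Finset

section Aux

variable {E X : Type*} [NormedAddCommGroup E] [NormedSpace ℝ E]
  [NormedAddCommGroup X] [NormedSpace ℝ X]

lemma topSucc : ((⊤ : ℕ∞) : WithTop ℕ∞) + 1 ≤ ((⊤ : ℕ∞) : WithTop ℕ∞) := by
  exact_mod_cast le_top

lemma oneLeTop : (1 : WithTop ℕ∞) ≤ ((⊤ : ℕ∞) : WithTop ℕ∞) := by
  exact_mod_cast le_top

lemma contDiff_lieF {F : ℝ × E → E} {ψ : ℝ × E → ℝ} (hF : ContDiff ℝ (⊤ : ℕ∞) F)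
    (hψ : ContDiff ℝ (⊤ : ℕ∞) ψ) : ContDiff ℝ (⊤ : ℕ∞) (lieF F ψ) :=
  (hψ.fderiv_right topSucc).clm_apply (contDiff_const.prodMk hF)

lemma contDiff_lieFIter {F : ℝ × E → E} {ψ : ℝ × E → ℝ} (hF : ContDiff ℝ (⊤ : ℕ∞) F)
    (hψ : ContDiff ℝ (⊤ : ℕ∞) ψ) (j : ℕ) : ContDiff ℝ (⊤ : ℕ∞) (lieFIter F ψ j) := by
  induction j with
  | zero => exact hψ
  | succ j ih =>
    have h1 : lieFIter F ψ (j + 1) = lieF F (lieFIter F ψ j) := by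
      simp [lieFIter, Function.iterate_succ_apply']
    rw [h1]; exact contDiff_lieF hF ih

lemma contDiff_lieGcol {r : ℕ} {G : ℝ × E → Fin r → E} {ψ : ℝ × E → ℝ} {j : Fin r}
    (hGj : ContDiff ℝ (⊤ : ℕ∞) (fun p => G p j)) (hψ : ContDiff ℝ (⊤ : ℕ∞) ψ) :
    ContDiff ℝ (⊤ : ℕ∞) (fun p => lieGcol G ψ p j) :=
  (hψ.fderiv_right topSucc).clm_apply (contDiff_const.prodMk hGj)

def projL (E X : Type*) [NormedAddCommGroup E] [NormedSpace ℝ E]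
    [NormedAddCommGroup X] [NormedSpace ℝ X] : (ℝ × (E × X)) →L[ℝ] (ℝ × E) :=
  (ContinuousLinearMap.fst ℝ ℝ (E × X)).prod
    ((ContinuousLinearMap.fst ℝ E X).comp (ContinuousLinearMap.snd ℝ ℝ (E × X)))

lemma hasFDerivAt_comp_proj (ψ : ℝ × E → ℝ)
    (hψ : Differentiable ℝ ψ) (p : ℝ × (E × X)) :
    HasFDerivAt (fun q : ℝ × (E × X) => ψ (q.1, q.2.1))
      ((fderiv ℝ ψ (p.1, p.2.1)).comp (projL E X)) p :=
  ((hψ (p.1, p.2.1)).hasFDerivAt).comp p ((projL E X).hasFDerivAt)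

lemma fderiv_comp_proj (ψ : ℝ × E → ℝ)
    (hψ : Differentiable ℝ ψ) (p : ℝ × (E × X)) (a : ℝ) (b : E × X) :
    fderiv ℝ (fun q : ℝ × (E × X) => ψ (q.1, q.2.1)) p (a, b)
      = fderiv ℝ ψ (p.1, p.2.1) (a, b.1) := by
  rw [(hasFDerivAt_comp_proj ψ hψ p).fderiv]; rfl

lemma hasDerivAt_sBeta (β v : ℝ) :
    HasDerivAt (sBeta β) (2 * β * Real.exp (-v) / (Real.exp (-v) + 1) ^ 2) v := by
  have hneg : HasDerivAt (fun v : ℝ => -v) (-1) v := (hasDerivAt_id v).neg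
  have h1 : HasDerivAt (fun v : ℝ => Real.exp (-v) + 1) (-Real.exp (-v)) v := by
    simpa using ((Real.hasDerivAt_exp (-v)).comp v hneg).add_const 1
  have hne : Real.exp (-v) + 1 ≠ 0 := by positivity
  have h3 := ((h1.inv hne).sub_const (1 / 2)).const_mul (2 * β)
  have hfun : sBeta β = fun w => 2 * β * ((Real.exp (-w) + 1)⁻¹ - 1 / 2) := by
    funext w; simp [sBeta, one_div]
  rw [hfun]
  have heq : 2 * β * Real.exp (-v) / (Real.exp (-v) + 1) ^ 2
      = 2 * β * (- -Real.exp (-v) / (Real.exp (-v) + 1) ^ 2) := by rw [neg_neg]; ring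
  rw [heq]; exact h3

lemma contDiff_augH {n m : ℕ} (ρ : Fin m → ℕ) {h : ℝ × (Fin n → ℝ) → Fin m → ℝ}
    (hh : ContDiff ℝ (⊤ : ℕ∞) h) (l : Fin m) : ContDiff ℝ (⊤ : ℕ∞) (augH ρ h l) := by
  have hproj : ContDiff ℝ (⊤ : ℕ∞) (fun p : ℝ × AugState n m ρ => (p.1, p.2.1)) :=
    contDiff_fst.prodMk contDiff_snd.fst
  exact contDiff_pi.mp (hh.comp hproj) l

lemma contDiff_augF {n m : ℕ} (ρ : Fin m → ℕ) {F : ℝ × (Fin n → ℝ) → Fin n → ℝ}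
    (hF : ContDiff ℝ (⊤ : ℕ∞) F) : ContDiff ℝ (⊤ : ℕ∞) (augF ρ F) := by
  have hproj : ContDiff ℝ (⊤ : ℕ∞) (fun p : ℝ × AugState n m ρ => (p.1, p.2.1)) :=
    contDiff_fst.prodMk contDiff_snd.fst
  refine ContDiff.prodMk (hF.comp hproj) ?_
  refine contDiff_pi.mpr fun k => contDiff_pi.mpr fun i => ?_
  by_cases hi : (i : ℕ) + 1 < ρ k
  · simp only [augF, dif_pos hi]
    have h1 : ContDiff ℝ (⊤ : ℕ∞) (fun p : ℝ × AugState n m ρ => p.2.2 k) :=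
      contDiff_pi.mp contDiff_snd.snd k
    exact contDiff_pi.mp h1 ⟨(i : ℕ) + 1, hi⟩
  · simp only [augF, dif_neg hi]
    exact contDiff_const

lemma contDiff_augG {n m : ℕ} (ρ : Fin m → ℕ) {G : ℝ × (Fin n → ℝ) → Fin n → Fin m → ℝ}
    (hG : ContDiff ℝ (⊤ : ℕ∞) G) (j : Fin m) :
    ContDiff ℝ (⊤ : ℕ∞) (fun p : ℝ × AugState n m ρ => augG ρ G p j) := by
  have hproj : ContDiff ℝ (⊤ : ℕ∞) (fun p : ℝ × AugState n m ρ => (p.1, p.2.1)) :=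
    contDiff_fst.prodMk contDiff_snd.fst
  refine ContDiff.prodMk ?_ contDiff_const
  refine contDiff_pi.mpr fun a => ?_
  refine ContDiff.mul (contDiff_pi.mp (contDiff_pi.mp (hG.comp hproj) a) j) ?_
  by_cases h0 : 0 < ρ j
  · simp only [augG, dif_pos h0]
    have h1 : ContDiff ℝ (⊤ : ℕ∞) (fun p : ℝ × AugState n m ρ => p.2.2 j) :=
      contDiff_pi.mp contDiff_snd.snd j
    exact contDiff_pi.mp h1 ⟨0, h0⟩
  · simp only [augG, dif_neg h0]
    exact contDiff_const

lemma lie_step {n m : ℕ} (ρ : Fin m → ℕ) (F : ℝ × (Fin n → ℝ) → Fin n → ℝ)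
    (G : ℝ × (Fin n → ℝ) → Fin n → Fin m → ℝ) (β : ℝ)
    (ψ : ℝ × AugState n m ρ → ℝ) (hψ : Differentiable ℝ ψ)
    (p : ℝ × IntState n m ρ) :
    lieF (intF ρ F G β) (fun q => ψ (q.1, q.2.1)) p =
      lieF (augF ρ F) ψ (p.1, p.2.1) +
        ∑ j, lieGcol (augG ρ G) ψ (p.1, p.2.1) j * sBeta β (p.2.2 j) := by
  have hsplit : ((1 : ℝ), (intF ρ F G β p).1)
      = ((1 : ℝ), augF ρ F (p.1, p.2.1))
        + ∑ j, sBeta β (p.2.2 j) • ((0 : ℝ), augG ρ G (p.1, p.2.1) j) := by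
    refine Prod.ext ?_ ?_
    · simp [intF, Prod.fst_sum]
    · simp [intF, Prod.snd_sum]
  simp only [lieF, lieGcol]
  rw [fderiv_comp_proj ψ hψ p, hsplit, map_add, map_sum]
  simp only [map_smul, smul_eq_mul]
  congr 1
  exact Finset.sum_congr rfl fun j _ => mul_comm _ _

def evalXi {n m : ℕ} (ρ : Fin m → ℕ) (k : Fin m) : (ℝ × IntState n m ρ) →L[ℝ] ℝ :=
  (ContinuousLinearMap.proj k).comp
    ((ContinuousLinearMap.snd ℝ (AugState n m ρ) (Fin m → ℝ)).comp
      (ContinuousLinearMap.snd ℝ ℝ (IntState n m ρ)))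

end Aux
/-- **Formulas (Eqs. (47)–(48)) in the proof of Corollary 1 of the paper.**
(a) `L_{f_I}^{σ_l} h_{I,l} = L_{f_A}^{σ_l} h_{A,l} + (L_{g_A} L_{f_A}^{σ_l-1} h_{A,l})·s_β(ξ)`;
(b) `L_{g_I} L_{f_I}^{σ_l} h_{I,l} = (L_{g_A} L_{f_A}^{σ_l-1} h_{A,l})·diag(s_β'(ξ_1),…,s_β'(ξ_m))`
with `s_β'(v) = 2β e^{-v}/(e^{-v}+1)²`. -/
theorem integral_lie_formulas_at_relative_degree
    {n m : ℕ} (ρ : Fin m → ℕ) (hρ : ∀ k, 1 ≤ ρ k)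
    (F : ℝ × (Fin n → ℝ) → Fin n → ℝ)
    (G : ℝ × (Fin n → ℝ) → Fin n → Fin m → ℝ)
    (h : ℝ × (Fin n → ℝ) → Fin m → ℝ)
    (hF : ContDiff ℝ (⊤ : ℕ∞) F) (hG : ContDiff ℝ (⊤ : ℕ∞) G)
    (hh : ContDiff ℝ (⊤ : ℕ∞) h)
    (β : ℝ) (hβ : 0 < β)
    (l : Fin m) (σl : ℕ) (hσl : 1 ≤ σl)
    (hzero : ∀ i : ℕ, i + 2 ≤ σl →
      ∀ p : ℝ × AugState n m ρ,
        lieGcol (augG ρ G) (lieFIter (augF ρ F) (augH ρ h l) i) p = 0) :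
    ∀ (t : ℝ) (xA : AugState n m ρ) (ξ : Fin m → ℝ),
      (lieFIter (intF ρ F G β) (intH ρ h l) σl (t, (xA, ξ)) =
        lieFIter (augF ρ F) (augH ρ h l) σl (t, xA) +
          ∑ j, lieGcol (augG ρ G) (lieFIter (augF ρ F) (augH ρ h l) (σl - 1)) (t, xA) j *
            sBeta β (ξ j)) ∧
      (∀ j : Fin m,
        lieGcol (intG ρ) (lieFIter (intF ρ F G β) (intH ρ h l) σl) (t, (xA, ξ)) j =
          lieGcol (augG ρ G) (lieFIter (augF ρ F) (augH ρ h l) (σl - 1)) (t, xA) j *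
            (2 * β * Real.exp (-ξ j) / (Real.exp (-ξ j) + 1) ^ 2)) := by
  intro t xA ξ
  obtain ⟨s, rfl⟩ : ∃ s, σl = s + 1 := ⟨σl - 1, (Nat.succ_pred_eq_of_pos hσl).symm⟩
  have hAs : ∀ i, ContDiff ℝ (⊤ : ℕ∞) (lieFIter (augF ρ F) (augH ρ h l) i) :=
    fun i => contDiff_lieFIter (contDiff_augF ρ hF) (contDiff_augH ρ hh l) i
  have hAd : ∀ i, Differentiable ℝ (lieFIter (augF ρ F) (augH ρ h l) i) :=
    fun i => (hAs i).differentiable (by simp)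
  have iter_eq : ∀ i, i ≤ s → ∀ p : ℝ × IntState n m ρ,
      lieFIter (intF ρ F G β) (intH ρ h l) i p
        = lieFIter (augF ρ F) (augH ρ h l) i (p.1, p.2.1) := by
    intro i
    induction i with
    | zero => intro _ p; rfl
    | succ i ih =>
      intro hi p
      have hfun : lieFIter (intF ρ F G β) (intH ρ h l) i
          = fun q : ℝ × IntState n m ρ => lieFIter (augF ρ F) (augH ρ h l) i (q.1, q.2.1) :=
        funext (fun q => ih (Nat.le_of_succ_le hi) q)
      have h1 : lieFIter (intF ρ F G β) (intH ρ h l) (i + 1) p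
          = lieF (intF ρ F G β) (lieFIter (intF ρ F G β) (intH ρ h l) i) p := by
        simp [lieFIter, Function.iterate_succ_apply']
      rw [h1, hfun, lie_step ρ F G β _ (hAd i) p]
      have hz : ∀ j : Fin m,
          lieGcol (augG ρ G) (lieFIter (augF ρ F) (augH ρ h l) i) (p.1, p.2.1) j = 0 := by
        intro j
        have := congrFun (hzero i (by omega) (p.1, p.2.1)) j
        simpa using this
      simp only [hz, zero_mul, Finset.sum_const_zero, add_zero]
      simp [lieFIter, Function.iterate_succ_apply']
  have key : ∀ p : ℝ × IntState n m ρ,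
      lieFIter (intF ρ F G β) (intH ρ h l) (s + 1) p
        = lieFIter (augF ρ F) (augH ρ h l) (s + 1) (p.1, p.2.1)
          + ∑ j, lieGcol (augG ρ G) (lieFIter (augF ρ F) (augH ρ h l) s) (p.1, p.2.1) j
              * sBeta β (p.2.2 j) := by
    intro p
    have hfun : lieFIter (intF ρ F G β) (intH ρ h l) s
        = fun q : ℝ × IntState n m ρ => lieFIter (augF ρ F) (augH ρ h l) s (q.1, q.2.1) :=
      funext (fun q => iter_eq s le_rfl q)
    have h1 : lieFIter (intF ρ F G β) (intH ρ h l) (s + 1) p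
        = lieF (intF ρ F G β) (lieFIter (intF ρ F G β) (intH ρ h l) s) p := by
      simp [lieFIter, Function.iterate_succ_apply']
    rw [h1, hfun, lie_step ρ F G β _ (hAd s) p]
    congr 1
    simp [lieFIter, Function.iterate_succ_apply']
  refine ⟨key (t, (xA, ξ)), ?_⟩
  intro j
  have hΦ : lieFIter (intF ρ F G β) (intH ρ h l) (s + 1)
      = fun q : ℝ × IntState n m ρ =>
          lieFIter (augF ρ F) (augH ρ h l) (s + 1) (q.1, q.2.1)
            + ∑ k, lieGcol (augG ρ G) (lieFIter (augF ρ F) (augH ρ h l) s) (q.1, q.2.1) k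
                * sBeta β (q.2.2 k) := funext key
  set A := lieFIter (augF ρ F) (augH ρ h l) (s + 1) with hA
  set B := lieGcol (augG ρ G) (lieFIter (augF ρ F) (augH ρ h l) s) with hB
  have hBd : ∀ k : Fin m, Differentiable ℝ (fun q => B q k) := fun k =>
    (contDiff_lieGcol (contDiff_augG ρ hG k) (hAs s)).differentiable (by simp)
  have hA' : HasFDerivAt (fun q : ℝ × IntState n m ρ => A (q.1, q.2.1))
      ((fderiv ℝ A (t, xA)).comp (projL (AugState n m ρ) (Fin m → ℝ)))
      (t, (xA, ξ)) := hasFDerivAt_comp_proj A (hAd (s + 1)) (t, (xA, ξ))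
  have hT : ∀ k : Fin m, HasFDerivAt
      (fun q : ℝ × IntState n m ρ => B (q.1, q.2.1) k * sBeta β (q.2.2 k))
      (B (t, xA) k • ((2 * β * Real.exp (-ξ k) / (Real.exp (-ξ k) + 1) ^ 2) • evalXi ρ k)
        + sBeta β (ξ k) • ((fderiv ℝ (fun q => B q k) (t, xA)).comp
            (projL (AugState n m ρ) (Fin m → ℝ)))) (t, (xA, ξ)) := by
    intro k
    have h1 := hasFDerivAt_comp_proj (fun q => B q k) (hBd k) (t, (xA, ξ))
    have h2 : HasFDerivAt (fun q : ℝ × IntState n m ρ => sBeta β (q.2.2 k))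
        ((2 * β * Real.exp (-ξ k) / (Real.exp (-ξ k) + 1) ^ 2) • evalXi ρ k) (t, (xA, ξ)) :=
      by
        have hev : HasFDerivAt (fun q : ℝ × IntState n m ρ => q.2.2 k) (evalXi ρ k) (t, (xA, ξ)) :=
          (evalXi ρ k).hasFDerivAt
        have hc := (hasDerivAt_sBeta β (ξ k)).comp_hasFDerivAt (t, (xA, ξ)) hev
        exact hc
    exact h1.mul h2
  have htot := hA'.fun_add (HasFDerivAt.fun_sum (u := Finset.univ) (fun k _ => hT k))
  have hres : lieGcol (intG ρ) (lieFIter (intF ρ F G β) (intH ρ h l) (s + 1))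
      (t, (xA, ξ)) j
      = B (t, xA) j * (2 * β * Real.exp (-ξ j) / (Real.exp (-ξ j) + 1) ^ 2) := by
    show fderiv ℝ (lieFIter (intF ρ F G β) (intH ρ h l) (s + 1)) (t, (xA, ξ))
        (0, intG ρ (t, (xA, ξ)) j) = _
    rw [hΦ, htot.fderiv]
    have hL0 : (projL (AugState n m ρ) (Fin m → ℝ))
        ((0 : ℝ), intG ρ (t, (xA, ξ)) j) = 0 := rfl
    have hE : ∀ k : Fin m, evalXi ρ k ((0 : ℝ), intG ρ (t, (xA, ξ)) j)
        = if k = j then 1 else 0 := by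
      intro k
      rw [show (evalXi ρ k) ((0 : ℝ), intG ρ (t, (xA, ξ)) j) = (Pi.single j 1 : Fin m → ℝ) k
        from rfl, Pi.single_apply]
    simp only [ContinuousLinearMap.add_apply, ContinuousLinearMap.coe_comp',
      Function.comp_apply, ContinuousLinearMap.sum_apply, ContinuousLinearMap.smul_apply,
      hL0, map_zero, smul_eq_mul, mul_zero, zero_add, add_zero, hE]
    simp [mul_ite, mul_zero, mul_one, Finset.sum_ite_eq']
  exact hres
end
end
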